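/- Let F be a field of characteristic 0 and q ≥ 1. For all g, h : Fin q → ZMod 2 × ZMod 2, the commutator c_g · c_h − c_h · c_g is either the zero matrix or an invertible matrix in M_{2^q}(F). -/
import Mathlib

open Matrix

def sigmaP (F : Type*) [Field F] (u : ZMod 2 × ZMod 2) : Matrix (Fin 2) (Fin 2) F :=
  if u = (0, 0) then !![1, 0; 0, 1]
  else if u = (1, 0) then !![1, 0; 0, -1]
  else if u = (0, 1) then !![0, 1; 1, 0]
  else !![0, 1; -1, 0]

def pauliKron (F : Type*) [Field F] : {q : ℕ} → (Fin q → ZMod 2 × ZMod 2) →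
    Matrix (Fin (2 ^ q)) (Fin (2 ^ q)) F
  | 0, _ => 1
  | q + 1, g =>
      Matrix.reindex (finProdFinEquiv.trans (finCongr (pow_succ 2 q).symm))
        (finProdFinEquiv.trans (finCongr (pow_succ 2 q).symm))
        (Matrix.kroneckerMap (· * ·) (pauliKron F (fun i => g i.castSucc))
          (sigmaP F (g (Fin.last q))))

lemma sigma_mul (F : Type*) [Field F] (u v : ZMod 2 × ZMod 2) :
    sigmaP F u * sigmaP F v = sigmaP F (u + v) ∨
    sigmaP F u * sigmaP F v = -(sigmaP F (u + v)) := by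
  obtain ⟨u1, u2⟩ := u; obtain ⟨v1, v2⟩ := v
  fin_cases u1 <;> fin_cases u2 <;> fin_cases v1 <;> fin_cases v2 <;>
    simp (config := { decide := true }) [sigmaP, Matrix.mul_fin_two, Prod.ext_iff]

open Kronecker

lemma pauliKron_succ (F : Type*) [Field F] (q : ℕ) (g : Fin (q + 1) → ZMod 2 × ZMod 2) :
    pauliKron F g =
      Matrix.reindex (finProdFinEquiv.trans (finCongr (pow_succ 2 q).symm))
        (finProdFinEquiv.trans (finCongr (pow_succ 2 q).symm))
        ((pauliKron F (fun i => g i.castSucc)) ⊗ₖ (sigmaP F (g (Fin.last q)))) := rfl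

lemma pauliKron_mul (F : Type*) [Field F] (q : ℕ) (g h : Fin q → ZMod 2 × ZMod 2) :
    pauliKron F g * pauliKron F h = pauliKron F (g + h) ∨
    pauliKron F g * pauliKron F h = -(pauliKron F (g + h)) := by
  induction q with
  | zero =>
      left
      simp [pauliKron]
  | succ q ih =>
      rw [pauliKron_succ, pauliKron_succ, pauliKron_succ]
      rw [Matrix.reindex_apply, Matrix.reindex_apply, Matrix.reindex_apply,
        Matrix.submatrix_mul_equiv, ← Matrix.mul_kronecker_mul]
      have h1 := ih (fun i => g i.castSucc) (fun i => h i.castSucc)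
      have h2 := sigma_mul F (g (Fin.last q)) (h (Fin.last q))
      have e1 : (fun i => g i.castSucc) + (fun i => h i.castSucc)
          = fun i : Fin q => (g + h) i.castSucc := rfl
      have e2 : g (Fin.last q) + h (Fin.last q) = (g + h) (Fin.last q) := rfl
      rw [e1] at h1; rw [e2] at h2
      rcases h1 with h1 | h1 <;> rcases h2 with h2 | h2 <;> rw [h1, h2] <;>
        [left; right; right; left] <;> simp [Matrix.kroneckerMap, Matrix.submatrix, neg_mul, mul_neg] <;> rfl

lemma pauliKron_zero (F : Type*) [Field F] (q : ℕ) :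
    pauliKron F (0 : Fin q → ZMod 2 × ZMod 2) = 1 := by
  induction q with
  | zero => rfl
  | succ q ih =>
      rw [pauliKron_succ]
      have e1 : (fun i : Fin q => (0 : Fin (q+1) → ZMod 2 × ZMod 2) i.castSucc) = 0 := rfl
      have e2 : sigmaP F ((0 : Fin (q+1) → ZMod 2 × ZMod 2) (Fin.last q)) = 1 := by
        simp [sigmaP, Prod.ext_iff, Matrix.one_fin_two]
      rw [e1, ih, e2, Matrix.one_kronecker_one, Matrix.reindex_apply, Matrix.submatrix_one_equiv]

lemma pauliKron_isUnit (F : Type*) [Field F] (q : ℕ) (g : Fin q → ZMod 2 × ZMod 2) :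
    IsUnit (pauliKron F g) := by
  have key : ∀ x : ZMod 2, x + x = 0 := by decide
  have hgg : g + g = 0 := by
    funext i
    exact Prod.ext (key _) (key _)
  rcases pauliKron_mul F q g g with h | h <;> rw [hgg, pauliKron_zero] at h
  · exact ⟨⟨_, _, h, h⟩, rfl⟩
  · exact ⟨⟨_, -(pauliKron F g), by rw [mul_neg, h, neg_neg], by rw [neg_mul, h, neg_neg]⟩, rfl⟩

/-- The commutator of two homogeneous basis matrices is either zero or invertible. -/
theorem pauliKron_commutator_zero_or_isUnit (F : Type*) [Field F] [CharZero F]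
    (q : ℕ) (hq : 1 ≤ q) (g h : Fin q → ZMod 2 × ZMod 2) :
    pauliKron F g * pauliKron F h - pauliKron F h * pauliKron F g = 0 ∨
    IsUnit (pauliKron F g * pauliKron F h - pauliKron F h * pauliKron F g) := by
  have hgh := pauliKron_mul F q g h
  have hhg := pauliKron_mul F q h g
  rw [add_comm h g] at hhg
  set S := pauliKron F (g + h) with hS
  have hSu : IsUnit S := pauliKron_isUnit F q (g + h)
  have h2 : IsUnit ((2 : F) • S) := by
    have := hSu.smul (Units.mk0 (2 : F) two_ne_zero)
    rwa [Units.smul_def, Units.val_mk0] at this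
  rcases hgh with h1 | h1 <;> rcases hhg with h4 | h4 <;> rw [h1, h4]
  · left; exact sub_self _
  · right
    rw [sub_neg_eq_add, ← two_smul F S]
    exact h2
  · right
    rw [sub_eq_add_neg, ← neg_add, ← two_smul F S]
    exact h2.neg
  · left; exact sub_self _
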